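/- Let (K(X)|K,v) be a valuation transcendental extension and let (a,γ) and (a',γ) be two minimal pairs of definition for v over K. Then the number of K-conjugates of a within distance γ of a equals the number of K-conjugates of a' within distance γ of a': j(a) = j(a'). In particular, j depends only on the valued extension and not on the choice of minimal pair. -/

import Mathlib

open IntermediateField Polynomial

namespace ValPaper

variable {Ω Γ : Type*} [Field Ω] [AddCommGroup Γ] [LinearOrder Γ] [IsOrderedAddMonoid Γ]

section Defs

variable (K : Type*) [Field K] [Algebra K Ω]

/-- The value group of an intermediate field `F` under the valuation `v`:
the subgroup of `Γ` generated by (equal to) the set of values of nonzero elements of `F`. -/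
noncomputable def valGroup (v : AddValuation Ω (WithTop Γ)) (F : IntermediateField K Ω) :
    AddSubgroup Γ :=
  AddSubgroup.closure {g : Γ | ∃ x ∈ F, x ≠ 0 ∧ v x = (g : WithTop Γ)}

/-- The ramification index `(vM : vF)`. -/
noncomputable def ramIndex (v : AddValuation Ω (WithTop Γ)) (F M : IntermediateField K Ω) : ℕ :=
  (valGroup K v F).relIndex (valGroup K v M)

/-- The valuation ring `O_F` of an intermediate field `F`. -/
noncomputable def integers (v : AddValuation Ω (WithTop Γ)) (F : IntermediateField K Ω) :
    Subring Ω where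
  carrier := {x | x ∈ F ∧ 0 ≤ v x}
  zero_mem' := ⟨zero_mem F, by simp⟩
  one_mem' := ⟨one_mem F, by simp⟩
  add_mem' := fun hx hy => ⟨add_mem hx.1 hy.1, le_trans (le_min hx.2 hy.2) (v.map_add _ _)⟩
  mul_mem' := fun hx hy => ⟨mul_mem hx.1 hy.1, by rw [v.map_mul]; exact add_nonneg hx.2 hy.2⟩
  neg_mem' := fun hx => ⟨neg_mem hx.1, by rw [v.map_neg]; exact hx.2⟩

/-- The maximal ideal of the valuation ring of `F`. -/
noncomputable def maxIdeal (v : AddValuation Ω (WithTop Γ)) (F : IntermediateField K Ω) :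
    Ideal (integers K v F) where
  carrier := {x | 0 < v (x : Ω)}
  zero_mem' := by
    show (0 : WithTop Γ) < v ((0 : integers K v F) : Ω)
    rw [show ((0 : integers K v F) : Ω) = 0 from rfl, v.map_zero]
    exact lt_of_le_of_ne le_top (by simp)
  add_mem' := fun {x y} hx hy => lt_of_lt_of_le (lt_min hx hy) (v.map_add _ _)
  smul_mem' := fun c {x} hx => by
    show (0 : WithTop Γ) < v ((c : Ω) * (x : Ω))
    rw [v.map_mul]
    exact lt_of_lt_of_le hx (le_add_of_nonneg_left c.2.2)

/-- The residue ring (in fact field) `Fv` of an intermediate field `F`. -/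
noncomputable abbrev Res (v : AddValuation Ω (WithTop Γ)) (F : IntermediateField K Ω) :=
  integers K v F ⧸ maxIdeal K v F

lemma integers_mono (v : AddValuation Ω (WithTop Γ)) {F M : IntermediateField K Ω} (h : F ≤ M) :
    integers K v F ≤ integers K v M := fun _ hx => ⟨h hx.1, hx.2⟩

/-- The canonical map between residue fields induced by an inclusion of intermediate fields. -/
noncomputable def resMap (v : AddValuation Ω (WithTop Γ)) {F M : IntermediateField K Ω}
    (h : F ≤ M) : Res K v F →+* Res K v M :=
  Ideal.quotientMap (maxIdeal K v M) (Subring.inclusion (integers_mono K v h))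
    (fun _ hx => hx)

set_option synthInstance.maxHeartbeats 1000000 in
open scoped Classical in
/-- The residue degree `[Mv : Fv]` (junk value `0` if `F ≰ M`). -/
noncomputable def resDeg (v : AddValuation Ω (WithTop Γ)) (F M : IntermediateField K Ω) : ℕ :=
  if h : F ≤ M then
    letI := (resMap K v h).toAlgebra
    Module.finrank (Res K v F) (Res K v M)
  else 0

/-- The defect `d(M|F,v)`, defined via the Lemma of Ostrowski as
`[M : F] / ((vM : vF) · [Mv : Fv])`. -/
noncomputable def defect (v : AddValuation Ω (WithTop Γ)) (F M : IntermediateField K Ω) : ℕ :=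
  relfinrank F M / (ramIndex K v F M * resDeg K v F M)

end Defs

section DefsBase

variable (F : Type*) [Field F] [Algebra F Ω]

open scoped Classical in
/-- `jnum v F a γ` is the number of `F`-conjugates `a'` of `a` (counted with multiplicity,
including `a` itself) such that `v (a - a') ≥ γ`. -/
noncomputable def jnum (v : AddValuation Ω (WithTop Γ)) (a : Ω) (γ : Γ) : ℕ :=
  Multiset.card (((minpoly F a).aroots Ω).filter fun r => (γ : WithTop Γ) ≤ v (a - r))

/-- `(a, γ)` is a minimal pair of definition for `v` over `F`:
(MP0) `a` is algebraic over `F` (i.e. `a ∈ F̄`),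
(MP1) `v (X - a) = γ = max v (X - F̄)`, and
(MP2) `v (a - b) ≥ γ` implies `[F(b) : F] ≥ [F(a) : F]` for all `b ∈ F̄`. -/
def IsMinimalPair (v : AddValuation Ω (WithTop Γ)) (X a : Ω) (γ : Γ) : Prop :=
  IsAlgebraic F a ∧ v (X - a) = (γ : WithTop Γ) ∧
    (∀ c : Ω, IsAlgebraic F c → v (X - c) ≤ (γ : WithTop Γ)) ∧
    ∀ b : Ω, IsAlgebraic F b → (γ : WithTop Γ) ≤ v (a - b) →
      Module.finrank F ↥(IntermediateField.adjoin F {a}) ≤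
        Module.finrank F ↥(IntermediateField.adjoin F {b})

/-- The decomposition group of `(F, v)` in `Ω`: all `F`-automorphisms compatible with `v`. -/
def decompGroup (v : AddValuation Ω (WithTop Γ)) : Subgroup (Ω ≃ₐ[F] Ω) where
  carrier := {σ | ∀ x : Ω, v (σ x) = v x}
  one_mem' := fun _ => rfl
  mul_mem' := fun {σ τ} hσ hτ x => by
    rw [AlgEquiv.mul_apply, hσ, hτ]
  inv_mem' := fun {σ} hσ x => by
    have h := hσ (σ⁻¹ x)
    rw [show σ (σ⁻¹ x) = x from AlgEquiv.apply_symm_apply σ x] at h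
    exact h.symm

/-- The henselization (= absolute decomposition field) of `(F, v)` inside `Ω`:
the elements of the separable closure of `F` fixed by the decomposition group. -/
noncomputable def henselAux (v : AddValuation Ω (WithTop Γ)) : IntermediateField F Ω :=
  separableClosure F Ω ⊓ IntermediateField.fixedField (decompGroup F v)

/-- The ramification group of `(F, v)` in `Ω`. -/
noncomputable def ramGroup (v : AddValuation Ω (WithTop Γ)) : Subgroup (Ω ≃ₐ[F] Ω) :=
  Subgroup.closure {σ | ∀ x ∈ separableClosure F Ω, x ≠ 0 → v x < v (σ x - x)}

/-- The absolute ramification field `F^r` of `(F, v)` inside `Ω`. -/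
noncomputable def ramField (v : AddValuation Ω (WithTop Γ)) : IntermediateField F Ω :=
  separableClosure F Ω ⊓ IntermediateField.fixedField (ramGroup F v)

end DefsBase

section DefsK

variable (K : Type*) [Field K] [Algebra K Ω]

/-- The henselization of an intermediate field `F`, viewed inside `IntermediateField K Ω`. -/
noncomputable def hensel (v : AddValuation Ω (WithTop Γ)) (F : IntermediateField K Ω) :
    IntermediateField K Ω :=
  (henselAux (↥F) v).restrictScalars K

/-- The relative algebraic closure `K̄` of `K` in `Ω` (as an intermediate field; when `Ω` is
algebraically closed this is an algebraic closure of `K`). -/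
noncomputable def algCl : IntermediateField K Ω :=
  IntermediateField.adjoin K {x : Ω | IsAlgebraic K x}

/-- The implicit constant field `IC (K(X)|K, v) := K̄ ∩ K(X)^h`. -/
noncomputable def ICfield (v : AddValuation Ω (WithTop Γ)) (X : Ω) : IntermediateField K Ω :=
  algCl K ⊓ hensel K v (IntermediateField.adjoin K {X})

/-- `(K(X)|K, v)` is value transcendental: `vK(X)/vK` has a nontorsion element,
i.e. `rat rk vK(X)/vK = 1`. -/
def ValueTrans (v : AddValuation Ω (WithTop Γ)) (X : Ω) : Prop :=
  ∃ g : Γ, g ∈ valGroup K v (IntermediateField.adjoin K {X}) ∧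
    ∀ n : ℕ, 0 < n → n • g ∉ valGroup K v (⊥ : IntermediateField K Ω)

/-- `(K(X)|K, v)` is residue transcendental: the residue field of `K(X)` contains an element
transcendental over the residue field of `K`, i.e. `trdeg (K(X)v | Kv) = 1`. -/
def ResidueTrans (v : AddValuation Ω (WithTop Γ)) (X : Ω) : Prop :=
  letI := (resMap K v (bot_le : (⊥ : IntermediateField K Ω) ≤
    IntermediateField.adjoin K {X})).toAlgebra
  ∃ ξ : Res K v (IntermediateField.adjoin K {X}),
    Transcendental (Res K v (⊥ : IntermediateField K Ω)) ξ

/-- `(K(X)|K, v)` is valuation transcendental: equality holds in the Abhyankar inequality,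
i.e. the extension is value transcendental or residue transcendental. -/
def ValuationTrans (v : AddValuation Ω (WithTop Γ)) (X : Ω) : Prop :=
  ValueTrans K v X ∨ ResidueTrans K v X

/-- `(K, v)` is a defectless field: every finite extension `M` of the henselization `K^h`
(inside `K̄ ⊆ Ω`) satisfies `[M : K^h] = (vM : vK^h)[Mv : K^h v]`. -/
def DefectlessField (v : AddValuation Ω (WithTop Γ)) : Prop :=
  ∀ M : IntermediateField K Ω, hensel K v ⊥ ≤ M → (∀ x ∈ M, IsAlgebraic K x) →
    relfinrank (hensel K v ⊥) M ≠ 0 →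
    relfinrank (hensel K v ⊥) M = ramIndex K v (hensel K v ⊥) M * resDeg K v (hensel K v ⊥) M

end DefsK

/-- The maximal ideal of the valuation ring is indeed maximal. -/
lemma maxIdeal_isMaximal (K : Type*) [Field K] [Algebra K Ω] (v : AddValuation Ω (WithTop Γ))
    (F : IntermediateField K Ω) : (maxIdeal K v F).IsMaximal := by
  rw [Ideal.isMaximal_iff]
  constructor
  · show ¬ (0 : WithTop Γ) < v ((1 : Ω))
    rw [v.map_one]
    exact lt_irrefl _
  · intro J x hIJ hxI hxJ
    have hx0 : 0 ≤ v (x : Ω) := x.2.2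
    have hxv : v (x : Ω) = 0 := le_antisymm (not_lt.mp hxI) hx0
    have hxne : (x : Ω) ≠ 0 := by
      intro h
      rw [h, v.map_zero] at hxv
      simp at hxv
    have hinv : v ((x : Ω)⁻¹) = 0 := by
      rw [v.map_inv, hxv]; simp
    have hmem : (x : Ω)⁻¹ ∈ integers K v F :=
      ⟨inv_mem (x.2.1 : (x : Ω) ∈ F), le_of_eq hinv.symm⟩
    have : (⟨(x : Ω)⁻¹, hmem⟩ * x : integers K v F) = 1 := by
      ext
      exact inv_mul_cancel₀ hxne
    have h1 : (⟨(x : Ω)⁻¹, hmem⟩ * x : integers K v F) ∈ J := J.mul_mem_left _ hxJ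
    rwa [this] at h1

/-- The residue ring of an intermediate field is a field. -/
noncomputable def resField (K : Type*) [Field K] [Algebra K Ω] (v : AddValuation Ω (WithTop Γ))
    (F : IntermediateField K Ω) : Field (Res K v F) :=
  letI := maxIdeal_isMaximal K v F
  Ideal.Quotient.field _

section Stmt9Aux

open Polynomial in
private lemma vp_coeff_zero {Ω : Type*} [Field Ω] (c : Ω) (P : Polynomial Ω) :
    ((X - C c) * P).coeff 0 = -(c * P.coeff 0) := by
  rw [sub_mul, coeff_sub, coeff_C_mul]
  simp [mul_coeff_zero]

open Polynomial in
private lemma vp_coeff_succ {Ω : Type*} [Field Ω] (c : Ω) (P : Polynomial Ω) (j : ℕ) :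
    ((X - C c) * P).coeff (j + 1) = P.coeff j - c * P.coeff (j + 1) := by
  rw [sub_mul, coeff_sub, coeff_C_mul, coeff_X_mul]

variable {Ω Γ : Type*} [Field Ω] [AddCommGroup Γ] [LinearOrder Γ] [IsOrderedAddMonoid Γ]

private lemma vp_m_ne_top (γ : Γ) (i : ℕ) : i • (γ : WithTop Γ) ≠ ⊤ := by
  induction i with
  | zero => simp
  | succ n ih =>
    rw [succ_nsmul]
    exact WithTop.add_ne_top.2 ⟨ih, WithTop.coe_ne_top⟩

open scoped Classical in
/-- The number of elements of `S` (with multiplicity) of value at least `γ`. -/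
private noncomputable def tcnt (v : AddValuation Ω (WithTop Γ)) (γ : Γ) (S : Multiset Ω) : ℕ :=
  Multiset.countP (fun c => (γ : WithTop Γ) ≤ v c) S

/-- Newton-polygon data: `W` is the Gauss valuation `min_i (v (coeff i) + i γ)` of `P`, and
`t` is the largest index achieving it. -/
private def KeyData (v : AddValuation Ω (WithTop Γ)) (γ : Γ) (P : Polynomial Ω) (t : ℕ)
    (W : WithTop Γ) : Prop :=
  W ≠ ⊤ ∧ v (P.coeff t) + t • (γ : WithTop Γ) = W ∧
    (∀ i, W ≤ v (P.coeff i) + i • (γ : WithTop Γ)) ∧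
    (∀ i, t < i → W < v (P.coeff i) + i • (γ : WithTop Γ))

open Polynomial in
open scoped Classical in
private lemma keyData_prod (v : AddValuation Ω (WithTop Γ)) (γ : Γ) (u : Ω) (hu : u ≠ 0)
    (S : Multiset Ω) :
    ∃ W, KeyData v γ (C u * (S.map fun c => X - C c).prod) (tcnt v γ S) W := by
  induction S using Multiset.induction_on with
  | empty =>
    refine ⟨v u, v.ne_top_iff.2 hu, ?_, ?_, ?_⟩
    · simp [tcnt]
    · intro i
      rcases i with _ | j
      · simp
      · simp only [Multiset.map_zero, Multiset.prod_zero, mul_one, coeff_C,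
          Nat.succ_ne_zero, if_false]
        rw [v.map_zero, top_add]
        exact le_top
    · intro i hi
      rcases i with _ | j
      · exact absurd hi (by simp [tcnt])
      · simp only [Multiset.map_zero, Multiset.prod_zero, mul_one, coeff_C,
          Nat.succ_ne_zero, if_false]
        rw [v.map_zero, top_add]
        exact lt_of_le_of_ne le_top (v.ne_top_iff.2 hu)
  | cons c S ih =>
    obtain ⟨W, hW, h2, h3, h4⟩ := ih
    set P := C u * (S.map fun c => X - C c).prod with hP
    set t := tcnt v γ S with htdef
    have hQ : C u * ((c ::ₘ S).map fun c => X - C c).prod = (X - C c) * P := by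
      rw [Multiset.map_cons, Multiset.prod_cons, hP]; ring
    rw [hQ]
    have h30 : W ≤ v (P.coeff 0) := by simpa using h3 0
    by_cases hc : (γ : WithTop Γ) ≤ v c
    · -- big root: t increases by one, W increases by γ
      have htc : tcnt v γ (c ::ₘ S) = t + 1 := by
        rw [htdef, tcnt, tcnt, Multiset.countP_cons, if_pos hc]
      rw [htc]
      refine ⟨W + γ, WithTop.add_ne_top.2 ⟨hW, WithTop.coe_ne_top⟩, ?_, ?_, ?_⟩
      · rw [vp_coeff_succ]
        have hA : v (P.coeff t) + (t + 1) • (γ : WithTop Γ) = W + γ := by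
          rw [succ_nsmul, ← add_assoc, h2]
        have hB : W + γ < v (c * P.coeff (t + 1)) + (t + 1) • (γ : WithTop Γ) := by
          rw [v.map_mul, add_assoc]
          calc W + (γ : WithTop Γ) = γ + W := add_comm _ _
          _ < γ + (v (P.coeff (t + 1)) + (t + 1) • (γ : WithTop Γ)) :=
              WithTop.add_lt_add_left WithTop.coe_ne_top (h4 _ (Nat.lt_succ_self t))
          _ ≤ v c + (v (P.coeff (t + 1)) + (t + 1) • (γ : WithTop Γ)) :=
              add_le_add_left hc _
        have hlt : v (P.coeff t) < v (c * P.coeff (t + 1)) := by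
          have := lt_of_eq_of_lt hA hB
          exact lt_of_add_lt_add_right this
        rw [v.map_sub_eq_of_lt_left hlt, hA]
      · intro i
        rcases i with _ | j
        · rw [vp_coeff_zero, v.map_neg, v.map_mul, zero_nsmul, add_zero]
          calc W + (γ : WithTop Γ) = γ + W := add_comm _ _
          _ ≤ v c + v (P.coeff 0) := add_le_add hc h30
        · rw [vp_coeff_succ]
          refine le_trans ?_ (add_le_add_left (v.map_sub _ _) _)
          rw [← min_add_add_right]
          refine le_min ?_ ?_
          · rw [succ_nsmul, ← add_assoc]
            exact add_le_add_left (h3 j) _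
          · rw [v.map_mul, add_assoc]
            calc W + (γ : WithTop Γ) = γ + W := add_comm _ _
            _ ≤ v c + (v (P.coeff (j + 1)) + (j + 1) • (γ : WithTop Γ)) :=
                add_le_add hc (h3 (j + 1))
      · intro i hi
        rcases i with _ | j
        · omega
        · have hj : t < j := by omega
          rw [vp_coeff_succ]
          refine lt_of_lt_of_le ?_ (add_le_add_left (v.map_sub _ _) _)
          rw [← min_add_add_right]
          refine lt_min ?_ ?_
          · rw [succ_nsmul, ← add_assoc]
            exact WithTop.add_lt_add_right WithTop.coe_ne_top (h4 j hj)
          · rw [v.map_mul, add_assoc]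
            calc W + (γ : WithTop Γ) = γ + W := add_comm _ _
            _ < γ + (v (P.coeff (j + 1)) + (j + 1) • (γ : WithTop Γ)) :=
                WithTop.add_lt_add_left WithTop.coe_ne_top (h4 (j + 1) (by omega))
            _ ≤ v c + (v (P.coeff (j + 1)) + (j + 1) • (γ : WithTop Γ)) :=
                add_le_add_left hc _
    · -- small root: t stays, W increases by v c
      have hclt : v c < (γ : WithTop Γ) := not_le.1 hc
      have hcne : v c ≠ ⊤ := ne_top_of_lt hclt
      have htc : tcnt v γ (c ::ₘ S) = t := by
        rw [htdef, tcnt, tcnt, Multiset.countP_cons, if_neg hc, add_zero]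
      rw [htc]
      refine ⟨W + v c, WithTop.add_ne_top.2 ⟨hW, hcne⟩, ?_, ?_, ?_⟩
      · rcases t with _ | s
        · rw [vp_coeff_zero, v.map_neg, v.map_mul, zero_nsmul, add_zero]
          have h20 : v (P.coeff 0) = W := by simpa using h2
          rw [h20, add_comm]
        · rw [vp_coeff_succ]
          have hB : v (c * P.coeff (s + 1)) + (s + 1) • (γ : WithTop Γ) = W + v c := by
            rw [v.map_mul, add_assoc, h2, add_comm]
          have hA : W + v c < v (P.coeff s) + (s + 1) • (γ : WithTop Γ) := by
            rw [succ_nsmul, ← add_assoc]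
            calc W + v c < W + γ := WithTop.add_lt_add_left hW hclt
            _ ≤ v (P.coeff s) + s • (γ : WithTop Γ) + γ :=
                add_le_add_left (h3 s) _
          have hlt : v (c * P.coeff (s + 1)) < v (P.coeff s) := by
            have := lt_of_eq_of_lt hB hA
            exact lt_of_add_lt_add_right this
          rw [v.map_sub_eq_of_lt_right hlt, hB]
      · intro i
        rcases i with _ | j
        · rw [vp_coeff_zero, v.map_neg, v.map_mul, zero_nsmul, add_zero]
          calc W + v c = v c + W := add_comm _ _
          _ ≤ v c + v (P.coeff 0) := add_le_add_right h30 _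
        · rw [vp_coeff_succ]
          refine le_trans ?_ (add_le_add_left (v.map_sub _ _) _)
          rw [← min_add_add_right]
          refine le_min ?_ ?_
          · rw [succ_nsmul, ← add_assoc]
            calc W + v c ≤ W + γ := add_le_add_right (le_of_lt hclt) _
            _ ≤ v (P.coeff j) + j • (γ : WithTop Γ) + γ := add_le_add_left (h3 j) _
          · rw [v.map_mul, add_assoc]
            calc W + v c = v c + W := add_comm _ _
            _ ≤ v c + (v (P.coeff (j + 1)) + (j + 1) • (γ : WithTop Γ)) :=
                add_le_add_right (h3 (j + 1)) _
      · intro i hi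
        rcases i with _ | j
        · exact absurd hi (by omega)
        · rw [vp_coeff_succ]
          refine lt_of_lt_of_le ?_ (add_le_add_left (v.map_sub _ _) _)
          rw [← min_add_add_right]
          refine lt_min ?_ ?_
          · rw [succ_nsmul, ← add_assoc]
            calc W + v c < W + γ := WithTop.add_lt_add_left hW hclt
            _ ≤ v (P.coeff j) + j • (γ : WithTop Γ) + γ := add_le_add_left (h3 j) _
          · rw [v.map_mul, add_assoc]
            calc W + v c = v c + W := add_comm _ _
            _ < v c + (v (P.coeff (j + 1)) + (j + 1) • (γ : WithTop Γ)) :=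
                WithTop.add_lt_add_left hcne (h4 (j + 1) hi)

private lemma keyData_unique {v : AddValuation Ω (WithTop Γ)} {γ : Γ} {P : Polynomial Ω}
    {t t' : ℕ} {W W' : WithTop Γ} (h : KeyData v γ P t W) (h' : KeyData v γ P t' W') :
    t = t' := by
  obtain ⟨hW, h2, h3, h4⟩ := h
  obtain ⟨hW', h2', h3', h4'⟩ := h'
  rcases lt_trichotomy t t' with hlt | he | hlt
  · exfalso
    have hWlt : W < W' := h2' ▸ h4 t' hlt
    have : W' ≤ W := h2 ▸ h3' t
    exact absurd (lt_of_lt_of_le hWlt this) (lt_irrefl W)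
  · exact he
  · exfalso
    have hWlt : W' < W := h2 ▸ h4' t hlt
    have : W ≤ W' := h2' ▸ h3 t'
    exact absurd (lt_of_lt_of_le hWlt this) (lt_irrefl W')

private lemma keyData_compare {v : AddValuation Ω (WithTop Γ)} {γ : Γ} {P P' : Polynomial Ω}
    {t t' : ℕ} {W W' W0 : WithTop Γ}
    (h : KeyData v γ P t W) (h' : KeyData v γ P' t' W')
    (hH : KeyData v γ (P - P') 0 W0) (ht : 1 ≤ t) (ht' : 1 ≤ t') : t = t' := by
  obtain ⟨hW, h2, h3, h4⟩ := h
  obtain ⟨hW', h2', h3', h4'⟩ := h'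
  obtain ⟨hW0, hH2, hH3, hH4⟩ := hH
  -- the Gauss value of `P - P'` is at least `min W W'`
  have h30 : W ≤ v (P.coeff 0) := by simpa using h3 0
  have h30' : W' ≤ v (P'.coeff 0) := by simpa using h3' 0
  have hW0ge : min W W' ≤ W0 := by
    rw [← hH2, Polynomial.coeff_sub, zero_nsmul, add_zero]
    exact le_trans (le_min ((min_le_left W W').trans h30) ((min_le_right W W').trans h30'))
      (v.map_sub _ _)
  -- first: W = W'
  have hWeq : W = W' := by
    rcases lt_trichotomy W W' with hlt | he | hlt
    · exfalso
      have hHt : W < v ((P - P').coeff t) + t • (γ : WithTop Γ) :=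
        lt_of_le_of_lt (le_trans (le_min le_rfl (le_of_lt hlt)) hW0ge) (hH4 t ht)
      have hP't : W < v (P'.coeff t) + t • (γ : WithTop Γ) := lt_of_lt_of_le hlt (h3' t)
      have : W < v (P.coeff t) + t • (γ : WithTop Γ) := by
        have hsum : P.coeff t = P'.coeff t + (P - P').coeff t := by rw [Polynomial.coeff_sub]; ring
        rw [hsum]
        refine lt_of_lt_of_le (lt_min hP't hHt) ?_
        rw [min_add_add_right]
        exact add_le_add_left (v.map_add _ _) _
      rw [h2] at this
      exact absurd this (lt_irrefl W)
    · exact he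
    · exfalso
      have hHt : W' < v ((P - P').coeff t') + t' • (γ : WithTop Γ) :=
        lt_of_le_of_lt (le_trans (le_min (le_of_lt hlt) le_rfl) hW0ge) (hH4 t' ht')
      have hPt : W' < v (P.coeff t') + t' • (γ : WithTop Γ) := lt_of_lt_of_le hlt (h3 t')
      have : W' < v (P'.coeff t') + t' • (γ : WithTop Γ) := by
        have hsum : P'.coeff t' = P.coeff t' - (P - P').coeff t' := by rw [Polynomial.coeff_sub]; ring
        rw [hsum]
        refine lt_of_lt_of_le (lt_min hPt hHt) ?_
        rw [min_add_add_right]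
        exact add_le_add_left (v.map_sub _ _) _
      rw [h2'] at this
      exact absurd this (lt_irrefl W')
  subst hWeq
  have hW0ge' : W ≤ W0 := le_trans (le_min le_rfl le_rfl) hW0ge
  -- now: t = t'
  rcases lt_trichotomy t t' with hlt | he | hlt
  · exfalso
    have hPt : W < v (P.coeff t') + t' • (γ : WithTop Γ) := h4 t' hlt
    have hHt : W < v ((P - P').coeff t') + t' • (γ : WithTop Γ) :=
      lt_of_le_of_lt hW0ge' (hH4 t' ht')
    have : W < v (P'.coeff t') + t' • (γ : WithTop Γ) := by
      have hsum : P'.coeff t' = P.coeff t' - (P - P').coeff t' := by rw [Polynomial.coeff_sub]; ring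
      rw [hsum]
      refine lt_of_lt_of_le (lt_min hPt hHt) ?_
      rw [min_add_add_right]
      exact add_le_add_left (v.map_sub _ _) _
    rw [h2'] at this
    exact absurd this (lt_irrefl W)
  · exact he
  · exfalso
    have hP't : W < v (P'.coeff t) + t • (γ : WithTop Γ) := h4' t hlt
    have hHt : W < v ((P - P').coeff t) + t • (γ : WithTop Γ) :=
      lt_of_le_of_lt hW0ge' (hH4 t ht)
    have : W < v (P.coeff t) + t • (γ : WithTop Γ) := by
      have hsum : P.coeff t = P'.coeff t + (P - P').coeff t := by rw [Polynomial.coeff_sub]; ring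
      rw [hsum]
      refine lt_of_lt_of_le (lt_min hP't hHt) ?_
      rw [min_add_add_right]
      exact add_le_add_left (v.map_add _ _) _
    rw [h2] at this
    exact absurd this (lt_irrefl W)

end Stmt9Aux


/-- Theorem 1.2. For a valuation transcendental extension, two minimal
pairs `(a, γ)` and `(a', γ)` give `j(a) = j(a')`: `j` is independent of the choice of minimal
pair of definition. -/
theorem stmt_9 {K Ω Γ : Type*} [Field K] [Field Ω] [Algebra K Ω] [IsAlgClosed Ω]
    [AddCommGroup Γ] [LinearOrder Γ] [IsOrderedAddMonoid Γ]
    (v : AddValuation Ω (WithTop Γ)) (X : Ω) (hX : Transcendental K X)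
    [Algebra.IsAlgebraic ↥(IntermediateField.adjoin K {X}) Ω]
    (hvt : ValuationTrans K v X) (a a' : Ω) (γ : Γ)
    (hmp : IsMinimalPair K v X a γ) (hmp' : IsMinimalPair K v X a' γ) :
    jnum K v a γ = jnum K v a' γ := by
  classical
  obtain ⟨ha, haX, hmax, hmin⟩ := hmp
  obtain ⟨ha', haX', hmax', hmin'⟩ := hmp'
  have hai : IsIntegral K a := ha.isIntegral
  have hai' : IsIntegral K a' := ha'.isIntegral
  -- the two centers are at distance at least γ
  have haa' : (γ : WithTop Γ) ≤ v (a - a') := by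
    have he : a - a' = (X - a') - (X - a) := by ring
    rw [he]
    exact le_trans (le_min (le_of_eq haX'.symm) (le_of_eq haX.symm)) (v.map_sub _ _)
  have ha'a : (γ : WithTop Γ) ≤ v (a' - a) := by rw [v.map_sub_swap]; exact haa'
  -- the minimal polynomials have the same degree
  have hdeg : (minpoly K a).natDegree = (minpoly K a').natDegree := by
    have h1 := hmin a' ha' haa'
    have h2 := hmin' a ha ha'a
    rw [IntermediateField.adjoin.finrank hai, IntermediateField.adjoin.finrank hai'] at h1 h2
    omega
  set p : Polynomial Ω := (minpoly K a).map (algebraMap K Ω) with hpdef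
  set p' : Polynomial Ω := (minpoly K a').map (algebraMap K Ω) with hp'def
  have hpm : p.Monic := (minpoly.monic hai).map _
  have hp'm : p'.Monic := (minpoly.monic hai').map _
  have haroot : a ∈ p.roots := by
    rw [Polynomial.mem_roots']
    refine ⟨hpm.ne_zero, ?_⟩
    rw [Polynomial.IsRoot, Polynomial.eval_map, ← Polynomial.aeval_def]
    exact minpoly.aeval K a
  have ha'root : a' ∈ p'.roots := by
    rw [Polynomial.mem_roots']
    refine ⟨hp'm.ne_zero, ?_⟩
    rw [Polynomial.IsRoot, Polynomial.eval_map, ← Polynomial.aeval_def]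
    exact minpoly.aeval K a'
  set S : Multiset Ω := p.roots.map (fun r => r - a) with hSdef
  set S' : Multiset Ω := p'.roots.map (fun r => r - a) with hS'def
  -- membership in the ball around a equals membership in the ball around a'
  have hball : ∀ r : Ω, ((γ : WithTop Γ) ≤ v (a' - r)) ↔ ((γ : WithTop Γ) ≤ v (r - a)) := by
    intro r
    constructor
    · intro h
      rw [v.map_sub_swap]
      have he : a - r = (a - a') + (a' - r) := by ring
      rw [he]
      exact le_trans (le_min haa' h) (v.map_add _ _)
    · intro h
      have he : a' - r = (a' - a) + (a - r) := by ring
      rw [he]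
      refine le_trans (le_min ha'a ?_) (v.map_add _ _)
      rw [v.map_sub_swap]
      exact h
  -- translate jnum into tcnt
  have hj : jnum K v a γ = tcnt v γ S := by
    rw [jnum, Polynomial.aroots_def, ← hpdef, tcnt, hSdef, Multiset.countP_map]
    refine congrArg Multiset.card (Multiset.filter_congr ?_)
    intro r _
    rw [v.map_sub_swap a r]
  have hj' : jnum K v a' γ = tcnt v γ S' := by
    rw [jnum, Polynomial.aroots_def, ← hp'def, tcnt, hS'def, Multiset.countP_map]
    refine congrArg Multiset.card (Multiset.filter_congr ?_)
    intro r _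
    exact hball r
  -- both counts are positive
  have htS : 1 ≤ tcnt v γ S := by
    refine Multiset.countP_pos.2 ⟨0, ?_, ?_⟩
    · exact Multiset.mem_map.2 ⟨a, haroot, sub_self a⟩
    · rw [v.map_zero]; exact le_top
  have htS' : 1 ≤ tcnt v γ S' := by
    refine Multiset.countP_pos.2 ⟨a' - a, ?_, ha'a⟩
    exact Multiset.mem_map.2 ⟨a', ha'root, rfl⟩
  -- the translation algebra map
  set ψ : Polynomial Ω →ₐ[Ω] Polynomial Ω :=
    Polynomial.aeval (Polynomial.X + Polynomial.C a) with hψdef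
  have hψlin : ∀ r : Ω, ψ (Polynomial.X - Polynomial.C r)
      = Polynomial.X - Polynomial.C (r - a) := by
    intro r
    rw [hψdef, map_sub, Polynomial.aeval_X, Polynomial.aeval_C, Polynomial.algebraMap_eq,
      Polynomial.C_sub]
    ring
  have hfact : ∀ q : Polynomial Ω, ψ ((q.roots.map fun r => Polynomial.X - Polynomial.C r).prod)
      = (((q.roots.map fun r => r - a)).map fun c => Polynomial.X - Polynomial.C c).prod := by
    intro q
    rw [map_multiset_prod, Multiset.map_map, Multiset.map_map]
    exact congrArg Multiset.prod (Multiset.map_congr rfl fun r _ => by simpa using hψlin r)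
  have hsp : p = (p.roots.map fun r => Polynomial.X - Polynomial.C r).prod :=
    (IsAlgClosed.splits p).eq_prod_roots_of_monic hpm
  have hsp' : p' = (p'.roots.map fun r => Polynomial.X - Polynomial.C r).prod :=
    (IsAlgClosed.splits p').eq_prod_roots_of_monic hp'm
  have hPfact : ψ p = Polynomial.C (1 : Ω) * (S.map fun c => Polynomial.X - Polynomial.C c).prod := by
    rw [map_one, one_mul]
    conv_lhs => rw [hsp]
    exact hfact p
  have hP'fact : ψ p' = Polynomial.C (1 : Ω) * (S'.map fun c => Polynomial.X - Polynomial.C c).prod := by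
    rw [map_one, one_mul]
    conv_lhs => rw [hsp']
    exact hfact p'
  by_cases hpp : minpoly K a = minpoly K a'
  · rw [hj, hj', hSdef, hS'def, hpdef, hp'def, hpp]
  · -- the difference polynomial
    have h0ne : minpoly K a - minpoly K a' ≠ 0 := sub_ne_zero.2 hpp
    have hmsub : p - p' = (minpoly K a - minpoly K a').map (algebraMap K Ω) := by
      rw [Polynomial.map_sub]
    have hmne : p - p' ≠ 0 := by
      rw [hmsub]
      exact Polynomial.map_ne_zero h0ne
    have hlcne : (p - p').leadingCoeff ≠ 0 := Polynomial.leadingCoeff_ne_zero.2 hmne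
    -- all roots of the difference are small
    have hdegsub : (minpoly K a - minpoly K a').natDegree < (minpoly K a).natDegree := by
      refine Polynomial.natDegree_lt_natDegree h0ne ?_
      refine Polynomial.degree_sub_lt ?_ (minpoly.ne_zero hai) ?_
      · rw [Polynomial.degree_eq_natDegree (minpoly.ne_zero hai),
          Polynomial.degree_eq_natDegree (minpoly.ne_zero hai'), hdeg]
      · rw [(minpoly.monic hai).leadingCoeff, (minpoly.monic hai').leadingCoeff]
    set T : Multiset Ω := (p - p').roots.map (fun r => r - a) with hTdef
    have hTsmall : ∀ c ∈ T, ¬ ((γ : WithTop Γ) ≤ v c) := by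
      intro c hc
      obtain ⟨ρ, hρ, rfl⟩ := Multiset.mem_map.1 hc
      intro hge
      have hρroot : Polynomial.aeval ρ (minpoly K a - minpoly K a') = 0 := by
        have := (Polynomial.mem_roots'.1 hρ).2
        rw [Polynomial.IsRoot, hmsub, Polynomial.eval_map, ← Polynomial.aeval_def] at this
        exact this
      have halg : IsAlgebraic K ρ := ⟨minpoly K a - minpoly K a', h0ne, hρroot⟩
      have h1 : Module.finrank K ↥(IntermediateField.adjoin K {a})
          ≤ Module.finrank K ↥(IntermediateField.adjoin K {ρ}) := by
        refine hmin ρ halg ?_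
        rw [v.map_sub_swap]
        exact hge
      rw [IntermediateField.adjoin.finrank hai, IntermediateField.adjoin.finrank halg.isIntegral]
        at h1
      have h2 : (minpoly K ρ).natDegree ≤ (minpoly K a - minpoly K a').natDegree :=
        Polynomial.natDegree_le_natDegree (minpoly.degree_le_of_ne_zero K ρ h0ne hρroot)
      omega
    have hTzero : tcnt v γ T = 0 := Multiset.countP_eq_zero.2 hTsmall
    have hHfact : ψ p - ψ p' = Polynomial.C (p - p').leadingCoeff
        * (T.map fun c => Polynomial.X - Polynomial.C c).prod := by
      rw [← map_sub ψ]
      conv_lhs => rw [(IsAlgClosed.splits (p - p')).eq_prod_roots]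
      rw [map_mul, hfact (p - p'), ← Polynomial.algebraMap_eq, AlgHom.commutes]
    obtain ⟨W, hKP⟩ := keyData_prod v γ 1 one_ne_zero S
    obtain ⟨W', hKP'⟩ := keyData_prod v γ 1 one_ne_zero S'
    obtain ⟨W0, hKH⟩ := keyData_prod v γ _ hlcne T
    rw [← hPfact] at hKP
    rw [← hP'fact] at hKP'
    rw [← hHfact, hTzero] at hKH
    rw [hj, hj']
    exact keyData_compare hKP hKP' hKH htS htS'

end ValPaper
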